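/- arXiv:1912.13493 — 8 statements merged into one kernel-verified Lean document; each statement's English description precedes it below -/
import Mathlib

section
/- For T > (N+2)c with c ≥ 0, the vector y with y_i = (T-c)/(N+1) for i = 1,...,N and y_{N+1} = (T+Nc)/(N+1) minimizes the function A(y) = (1/2)∑_{i=1}^{N+1} y_i² + c∑_{i=1}^{N} y_i over all y ∈ ℝ^{N+1} satisfying ∑_{i=1}^{N+1} y_i = T, y_1 ≥ 0, and y_i ≥ c for i = 2,...,N+1. -/
open Finset

/-- For T > (N+2)c with c ≥ 0, the vector y with y_i = (T-c)/(N+1) for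
i = 1,...,N and y_{N+1} = (T+Nc)/(N+1) minimizes
A(y) = (1/2)∑_{i=1}^{N+1} y_i² + c∑_{i=1}^{N} y_i over all feasible y. -/
theorem stmt_0 (N : ℕ) (hN : 1 ≤ N) (T c : ℝ) (hc : 0 ≤ c)
    (hT : ((N : ℝ) + 2) * c < T)
    (y : ℕ → ℝ)
    (hy : ∀ i ∈ Icc 1 N, y i = (T - c) / ((N : ℝ) + 1))
    (hylast : y (N + 1) = (T + (N : ℝ) * c) / ((N : ℝ) + 1)) :
    ((∑ i ∈ Icc 1 (N + 1), y i) = T ∧ 0 ≤ y 1 ∧ (∀ i ∈ Icc 2 (N + 1), c ≤ y i)) ∧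
    (∀ z : ℕ → ℝ, (∑ i ∈ Icc 1 (N + 1), z i) = T → 0 ≤ z 1 →
      (∀ i ∈ Icc 2 (N + 1), c ≤ z i) →
      (1 / 2) * (∑ i ∈ Icc 1 (N + 1), (y i) ^ 2) + c * (∑ i ∈ Icc 1 N, y i) ≤
      (1 / 2) * (∑ i ∈ Icc 1 (N + 1), (z i) ^ 2) + c * (∑ i ∈ Icc 1 N, z i)) := by
  set m : ℝ := (T - c) / ((N : ℝ) + 1) with hmdef
  have hNpos : (0 : ℝ) < (N : ℝ) + 1 := by positivity
  have hm : m * ((N : ℝ) + 1) = T - c := by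
    rw [hmdef, div_mul_cancel₀ _ hNpos.ne']
  have hcm : c ≤ m := by
    rw [hmdef, le_div_iff₀ hNpos]
    nlinarith
  have hm0 : 0 ≤ m := le_trans hc hcm
  have hylast' : y (N + 1) = m + c := by
    rw [hylast, hmdef]
    field_simp
    ring
  have hsplit : ∀ f : ℕ → ℝ,
      ∑ i ∈ Icc 1 (N + 1), f i = ∑ i ∈ Icc 1 N, f i + f (N + 1) := by
    intro f
    exact Finset.sum_Icc_succ_top (by omega) f
  have hcard : (Icc 1 N).card = N := by
    rw [Nat.card_Icc]; omega
  have hysum : ∑ i ∈ Icc 1 N, y i = (N : ℝ) * m := by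
    rw [Finset.sum_congr rfl hy, Finset.sum_const, hcard]
    simp [nsmul_eq_mul]
  have hysq : ∑ i ∈ Icc 1 N, (y i) ^ 2 = (N : ℝ) * m ^ 2 := by
    have : ∀ i ∈ Icc 1 N, (y i) ^ 2 = m ^ 2 := fun i hi => by rw [hy i hi]
    rw [Finset.sum_congr rfl this, Finset.sum_const, hcard]
    simp [nsmul_eq_mul]
  have hy1 : y 1 = m := hy 1 (by simp [Finset.mem_Icc]; omega)
  constructor
  · refine ⟨?_, ?_, ?_⟩
    · rw [hsplit, hysum, hylast']
      linarith
    · rw [hy1]; exact hm0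
    · intro i hi
      simp only [Finset.mem_Icc] at hi
      rcases Nat.lt_or_ge i (N + 1) with h | h
      · rw [hy i (by simp [Finset.mem_Icc]; omega)]
        exact hcm
      · have : i = N + 1 := by omega
        rw [this, hylast']
        linarith
  · intro z hz _ _
    have hzs : ∑ i ∈ Icc 1 (N + 1), (z i) ^ 2
        = ∑ i ∈ Icc 1 N, (z i) ^ 2 + (z (N + 1)) ^ 2 :=
      Finset.sum_Icc_succ_top (by omega) _
    have hys : ∑ i ∈ Icc 1 (N + 1), (y i) ^ 2
        = ∑ i ∈ Icc 1 N, (y i) ^ 2 + (y (N + 1)) ^ 2 :=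
      Finset.sum_Icc_succ_top (by omega) _
    rw [hsplit z] at hz
    rw [hzs, hys, hysq, hysum, hylast']
    set S : ℝ := ∑ i ∈ Icc 1 N, z i with hSdef
    set Q : ℝ := ∑ i ∈ Icc 1 N, (z i) ^ 2 with hQdef
    have hexp : ∑ i ∈ Icc 1 N, (z i - m) ^ 2 = Q - 2 * m * S + (N : ℝ) * m ^ 2 := by
      have h1 : ∀ i ∈ Icc 1 N, (z i - m) ^ 2 = (z i) ^ 2 - (2 * m) * z i + m ^ 2 :=
        fun i _ => by ring
      rw [Finset.sum_congr rfl h1, Finset.sum_add_distrib, Finset.sum_sub_distrib,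
        ← Finset.mul_sum, Finset.sum_const, hcard]
      simp [nsmul_eq_mul, hQdef, hSdef]
    have hnn1 : 0 ≤ Q - 2 * m * S + (N : ℝ) * m ^ 2 := by
      rw [← hexp]
      exact Finset.sum_nonneg fun i _ => sq_nonneg _
    have hnn2 : 0 ≤ (z (N + 1) - (m + c)) ^ 2 := sq_nonneg _
    have key : (1 / 2) * (Q + (z (N + 1)) ^ 2) + c * S -
        ((1 / 2) * ((N : ℝ) * m ^ 2 + (m + c) ^ 2) + c * ((N : ℝ) * m)) =
        (1 / 2) * ((Q - 2 * m * S + (N : ℝ) * m ^ 2) + (z (N + 1) - (m + c)) ^ 2) := by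
      linear_combination (c + m) * hz - (c + m) * hm
    linarith
end

section
/- For Nc < T ≤ (N+2)c with c > 0, the vector y with y_1 = (T-Nc)/2, y_i = c for i = 2,...,N, and y_{N+1} = (T-(N-2)c)/2 minimizes A(y) = (1/2)∑_{i=1}^{N+1} y_i² + c∑_{i=1}^{N} y_i over all y ∈ ℝ^{N+1} satisfying ∑_{i=1}^{N+1} y_i = T, y_1 ≥ 0, and y_i ≥ c for i = 2,...,N+1. -/
open Finset

lemma split_sum (N : ℕ) (hN : 1 ≤ N) (f : ℕ → ℝ) :
    (∑ i ∈ Icc 1 (N + 1), f i) = f 1 + f (N + 1) + ∑ i ∈ Icc 2 N, f i := by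
  have e3 : Icc 1 (N + 1) = insert 1 (insert (N + 1) (Icc 2 N)) := by
    ext i; simp [mem_Icc]; omega
  have h1 : (1 : ℕ) ∉ insert (N + 1) (Icc 2 N) := by simp [mem_Icc]; omega
  have h2 : N + 1 ∉ Icc 2 N := by simp [mem_Icc]
  rw [e3, sum_insert h1, sum_insert h2]; ring

lemma split_sum' (N : ℕ) (hN : 1 ≤ N) (f : ℕ → ℝ) :
    (∑ i ∈ Icc 1 N, f i) = f 1 + ∑ i ∈ Icc 2 N, f i := by
  have e1 : Icc 1 N = insert 1 (Icc 2 N) := by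
    ext i; simp [mem_Icc]; omega
  have h1 : (1 : ℕ) ∉ Icc 2 N := by simp [mem_Icc]
  rw [e1, sum_insert h1]

/-- For Nc < T ≤ (N+2)c with c > 0, the vector y with y_1 = (T-Nc)/2,
y_i = c for i = 2,...,N, and y_{N+1} = (T-(N-2)c)/2 minimizes
A(y) = (1/2)∑ y_i² + c∑_{i=1}^N y_i over feasible y. -/
theorem stmt_1 (N : ℕ) (hN : 1 ≤ N) (T c : ℝ) (hc : 0 < c)
    (hT1 : (N : ℝ) * c < T) (hT2 : T ≤ ((N : ℝ) + 2) * c)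
    (y : ℕ → ℝ)
    (hy1 : y 1 = (T - (N : ℝ) * c) / 2)
    (hy : ∀ i ∈ Icc 2 N, y i = c)
    (hylast : y (N + 1) = (T - ((N : ℝ) - 2) * c) / 2) :
    ((∑ i ∈ Icc 1 (N + 1), y i) = T ∧ 0 ≤ y 1 ∧ (∀ i ∈ Icc 2 (N + 1), c ≤ y i)) ∧
    (∀ z : ℕ → ℝ, (∑ i ∈ Icc 1 (N + 1), z i) = T → 0 ≤ z 1 →
      (∀ i ∈ Icc 2 (N + 1), c ≤ z i) →
      (1 / 2) * (∑ i ∈ Icc 1 (N + 1), (y i) ^ 2) + c * (∑ i ∈ Icc 1 N, y i) ≤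
      (1 / 2) * (∑ i ∈ Icc 1 (N + 1), (z i) ^ 2) + c * (∑ i ∈ Icc 1 N, z i)) := by
  have hn1 : (1 : ℝ) ≤ (N : ℝ) := by exact_mod_cast hN
  have hcardR : ((Icc 2 N).card : ℝ) = (N : ℝ) - 1 := by
    rw [Nat.card_Icc]
    have : N + 1 - 2 = N - 1 := by omega
    rw [this, Nat.cast_sub hN]; simp
  have hysum : (∑ i ∈ Icc 2 N, y i) = ((N : ℝ) - 1) * c := by
    rw [sum_congr rfl hy, sum_const, nsmul_eq_mul, hcardR]
  have hysq : (∑ i ∈ Icc 2 N, (y i) ^ 2) = ((N : ℝ) - 1) * c ^ 2 := by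
    have : ∀ i ∈ Icc 2 N, (y i) ^ 2 = c ^ 2 := fun i hi => by rw [hy i hi]
    rw [sum_congr rfl this, sum_const, nsmul_eq_mul, hcardR]
  constructor
  · refine ⟨?_, ?_, ?_⟩
    · rw [split_sum N hN, hysum, hy1, hylast]; ring
    · rw [hy1]; linarith
    · intro i hi
      simp only [mem_Icc] at hi
      rcases eq_or_lt_of_le hi.2 with h | h
      · rw [h, hylast]; linarith
      · rw [hy i (by simp [mem_Icc]; omega)]
  · intro z hzs hz0 hzc
    have hb : c ≤ z (N + 1) := hzc (N + 1) (by simp [mem_Icc]; omega)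
    have hs : ((N : ℝ) - 1) * c ≤ ∑ i ∈ Icc 2 N, z i := by
      calc ((N : ℝ) - 1) * c = ∑ _i ∈ Icc 2 N, c := by
            rw [sum_const, nsmul_eq_mul, hcardR]
        _ ≤ ∑ i ∈ Icc 2 N, z i := by
            apply sum_le_sum
            intro i hi
            simp only [mem_Icc] at hi
            exact hzc i (by simp [mem_Icc]; omega)
    have hq : 2 * c * (∑ i ∈ Icc 2 N, z i) - ((N : ℝ) - 1) * c ^ 2
        ≤ ∑ i ∈ Icc 2 N, (z i) ^ 2 := by
      have : (∑ i ∈ Icc 2 N, (2 * c * z i - c ^ 2)) ≤ ∑ i ∈ Icc 2 N, (z i) ^ 2 := by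
        apply sum_le_sum
        intro i _
        nlinarith [sq_nonneg (z i - c)]
      calc 2 * c * (∑ i ∈ Icc 2 N, z i) - ((N : ℝ) - 1) * c ^ 2
          = ∑ i ∈ Icc 2 N, (2 * c * z i - c ^ 2) := by
            rw [sum_sub_distrib, ← mul_sum, sum_const, nsmul_eq_mul, hcardR]
        _ ≤ _ := this
    rw [split_sum N hN (fun i => (y i) ^ 2), split_sum N hN (fun i => (z i) ^ 2),
      split_sum' N hN y, split_sum' N hN z, hysq, hysum, hy1, hylast]
    rw [split_sum N hN z] at hzs
    nlinarith [sq_nonneg (z 1 - (T - (N : ℝ) * c) / 2),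
      sq_nonneg (z (N + 1) - (T - ((N : ℝ) - 2) * c) / 2),
      mul_nonneg (by linarith : (0:ℝ) ≤ 2 * c - (T - ((N : ℝ) - 2) * c) / 2)
        (by linarith : (0:ℝ) ≤ (∑ i ∈ Icc 2 N, z i) - ((N : ℝ) - 1) * c)]
end

section
/- Let α > 0, T > 0, N ≥ 1. Suppose (y, c) ∈ ℝ^{N+1} × ℝ^N minimizes (1/2)∑_{i=1}^{N+1} y_i² + ∑_{i=1}^{N} c_i y_i subject to ∑_{i=1}^{N+1} y_i = T, y_1 ≥ 0, y_i ≥ c_{i-1} for i = 2,...,N+1, c_i ≥ 0, and c_i ≥ α y_i for i = 1,...,N, with y_i > 0 for all i. Then c_i = α y_i for all i = 1,...,N. -/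
open Finset

/-- Lemma 1: if (y, c) minimizes (1/2)∑ y_i² + ∑ c_i y_i subject to
∑ y_i = T, y_1 ≥ 0, y_i ≥ c_{i-1}, c_i ≥ 0, c_i ≥ α y_i, and y_i > 0 for all i,
then c_i = α y_i for all i = 1,...,N. -/
theorem stmt_5 (N : ℕ) (hN : 1 ≤ N) (α T : ℝ) (hα : 0 < α) (hT : 0 < T)
    (y : ℕ → ℝ) (c : ℕ → ℝ)
    (hsum : (∑ i ∈ Icc 1 (N + 1), y i) = T)
    (hy1 : 0 ≤ y 1)
    (hfeas : ∀ i ∈ Icc 2 (N + 1), c (i - 1) ≤ y i)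
    (hc0 : ∀ i ∈ Icc 1 N, 0 ≤ c i)
    (hcα : ∀ i ∈ Icc 1 N, α * y i ≤ c i)
    (hypos : ∀ i ∈ Icc 1 (N + 1), 0 < y i)
    (hopt : ∀ z d : ℕ → ℝ, (∑ i ∈ Icc 1 (N + 1), z i) = T → 0 ≤ z 1 →
      (∀ i ∈ Icc 2 (N + 1), d (i - 1) ≤ z i) →
      (∀ i ∈ Icc 1 N, 0 ≤ d i) → (∀ i ∈ Icc 1 N, α * z i ≤ d i) →
      (1 / 2) * (∑ i ∈ Icc 1 (N + 1), (y i) ^ 2) + (∑ i ∈ Icc 1 N, c i * y i) ≤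
      (1 / 2) * (∑ i ∈ Icc 1 (N + 1), (z i) ^ 2) + (∑ i ∈ Icc 1 N, d i * z i)) :
    ∀ i ∈ Icc 1 N, c i = α * y i := by
  intro j hj
  by_contra hne
  have hjIcc : j ∈ Icc 1 (N + 1) := by
    simp only [mem_Icc] at hj ⊢; omega
  have hyj : 0 < y j := hypos j hjIcc
  have hlt : α * y j < c j := lt_of_le_of_ne (hcα j hj) (fun h => hne h.symm)
  set d : ℕ → ℝ := fun i => if i = j then α * y j else c i with hd
  have hdle : ∀ i ∈ Icc 1 N, d i ≤ c i := by
    intro i hi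
    simp only [hd]
    by_cases h : i = j
    · simp [h]; exact le_of_lt hlt
    · simp [h]
  have h1 : (1 / 2) * (∑ i ∈ Icc 1 (N + 1), (y i) ^ 2) + (∑ i ∈ Icc 1 N, c i * y i) ≤
      (1 / 2) * (∑ i ∈ Icc 1 (N + 1), (y i) ^ 2) + (∑ i ∈ Icc 1 N, d i * y i) := by
    apply hopt y d hsum hy1
    · intro i hi
      simp only [mem_Icc] at hi
      by_cases h : i - 1 = j
      · simp only [hd, h, if_pos rfl]
        calc α * y j ≤ c j := le_of_lt hlt
          _ = c (i - 1) := by rw [h]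
          _ ≤ y i := hfeas i (by simp [mem_Icc]; omega)
      · simp only [hd, if_neg h]
        exact hfeas i (by simp [mem_Icc]; omega)
    · intro i hi
      simp only [hd]
      by_cases h : i = j
      · simp [h]; positivity
      · simp [h]; exact hc0 i hi
    · intro i hi
      simp only [hd]
      by_cases h : i = j
      · simp [h]
      · simp [h]; exact hcα i hi
  have h2 : (∑ i ∈ Icc 1 N, d i * y i) < (∑ i ∈ Icc 1 N, c i * y i) := by
    apply Finset.sum_lt_sum
    · intro i hi
      have := hdle i hi
      have hyi : 0 < y i := hypos i (by simp only [mem_Icc] at hi ⊢; omega)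
      nlinarith
    · refine ⟨j, hj, ?_⟩
      simp only [hd, if_pos rfl]
      nlinarith
  linarith
end

section
/- For 0 < α < 1 and T > 0, the vector y with y_i = T/(N+2α+1) for i = 1,...,N and y_{N+1} = (2α+1)T/(N+2α+1) minimizes (1/2 + α)∑_{i=1}^{N} y_i² + (1/2)y_{N+1}² over all y ∈ ℝ^{N+1} satisfying ∑_{i=1}^{N+1} y_i = T, y_1 ≥ 0, and y_i ≥ α y_{i-1} for i = 2,...,N+1. -/
open Finset

/-- For 0 < α < 1 and T > 0, y_i = T/(N+2α+1) for i = 1,...,N and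
y_{N+1} = (2α+1)T/(N+2α+1) minimizes (1/2+α)∑_{i=1}^N y_i² + (1/2)y_{N+1}²
over y with ∑ y_i = T, y_1 ≥ 0, y_i ≥ α y_{i-1} for i = 2,...,N+1. -/
theorem stmt_6 (N : ℕ) (hN : 1 ≤ N) (α T : ℝ) (hα0 : 0 < α) (hα1 : α < 1) (hT : 0 < T)
    (y : ℕ → ℝ)
    (hy : ∀ i ∈ Icc 1 N, y i = T / ((N : ℝ) + 2 * α + 1))
    (hylast : y (N + 1) = (2 * α + 1) * T / ((N : ℝ) + 2 * α + 1)) :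
    ((∑ i ∈ Icc 1 (N + 1), y i) = T ∧ 0 ≤ y 1 ∧
      (∀ i ∈ Icc 2 (N + 1), α * y (i - 1) ≤ y i)) ∧
    (∀ z : ℕ → ℝ, (∑ i ∈ Icc 1 (N + 1), z i) = T → 0 ≤ z 1 →
      (∀ i ∈ Icc 2 (N + 1), α * z (i - 1) ≤ z i) →
      (1 / 2 + α) * (∑ i ∈ Icc 1 N, (y i) ^ 2) + (1 / 2) * (y (N + 1)) ^ 2 ≤
      (1 / 2 + α) * (∑ i ∈ Icc 1 N, (z i) ^ 2) + (1 / 2) * (z (N + 1)) ^ 2) := by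
  have hden : (0:ℝ) < (N : ℝ) + 2 * α + 1 := by positivity
  set c : ℝ := T / ((N : ℝ) + 2 * α + 1) with hc_def
  have hc : 0 < c := div_pos hT hden
  have hylast' : y (N + 1) = (2 * α + 1) * c := by rw [hylast, hc_def]; ring
  have hsumy : ∑ i ∈ Icc 1 N, y i = (N : ℝ) * c := by
    rw [Finset.sum_congr rfl hy, Finset.sum_const, Nat.card_Icc]
    simp [nsmul_eq_mul]
  have hS : ∑ i ∈ Icc 1 (N + 1), y i = T := by
    rw [Finset.sum_Icc_succ_top (by omega : 1 ≤ N + 1), hsumy, hylast', hc_def]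
    field_simp
    ring
  refine ⟨⟨hS, ?_, ?_⟩, ?_⟩
  · rw [hy 1 (by simp [hN])]; exact hc.le
  · intro i hi
    simp only [Finset.mem_Icc] at hi
    rcases eq_or_lt_of_le hi.2 with h | h
    · subst h
      simp only [Nat.add_sub_cancel]
      rw [hylast', hy N (by simp [Finset.mem_Icc]; omega)]
      nlinarith
    · rw [hy i (by simp [Finset.mem_Icc]; omega),
        hy (i - 1) (by simp [Finset.mem_Icc]; omega)]
      nlinarith
  · intro z hSz _ _
    have key : ∀ i ∈ Icc 1 N,
        (1/2 + α) * (y i)^2 + (1 + 2*α) * c * (z i - y i) ≤ (1/2 + α) * (z i)^2 := by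
      intro i hi
      rw [hy i hi]
      nlinarith [sq_nonneg (z i - c), hα0.le]
    have h1 := Finset.sum_le_sum key
    simp only [Finset.sum_add_distrib, ← Finset.mul_sum, Finset.sum_sub_distrib] at h1
    have h2 : (1/2) * (y (N+1))^2 + (1 + 2*α) * c * (z (N+1) - y (N+1)) ≤
        (1/2) * (z (N+1))^2 := by
      rw [hylast']
      nlinarith [sq_nonneg (z (N+1) - (2*α+1)*c)]
    rw [Finset.sum_Icc_succ_top (by omega : 1 ≤ N + 1)] at hSz
    rw [Finset.sum_Icc_succ_top (by omega : 1 ≤ N + 1)] at hS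
    have e : (1 + 2*α) * c * (∑ i ∈ Icc 1 N, z i - ∑ i ∈ Icc 1 N, y i)
        + (1 + 2*α) * c * (z (N + 1) - y (N + 1)) = 0 := by
      have h4 : (∑ i ∈ Icc 1 N, z i - ∑ i ∈ Icc 1 N, y i) = y (N + 1) - z (N + 1) := by
        linarith
      rw [h4]; ring
    linarith [h1, h2, e]
end

section
/- Let α > 1, T > 0, N ≥ 2. Any minimizer y of (1/2 + α)∑_{i=1}^{N} y_i² + (1/2)y_{N+1}² over y ∈ ℝ^{N+1} with ∑_{i=1}^{N+1} y_i = T, y_1 ≥ 0, and y_i ≥ α y_{i-1} for i = 2,...,N+1, satisfies y_i = α y_{i-1} for all i = 2,...,N. -/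
open Finset

set_option maxHeartbeats 1000000 in
/-- Lemma 2: for α > 1, any minimizer y of
(1/2+α)∑_{i=1}^N y_i² + (1/2)y_{N+1}² subject to ∑ y_i = T, y_1 ≥ 0,
y_i ≥ α y_{i-1} for i = 2,...,N+1, satisfies y_i = α y_{i-1} for i = 2,...,N. -/
theorem stmt_7 (N : ℕ) (hN : 2 ≤ N) (α T : ℝ) (hα : 1 < α) (hT : 0 < T)
    (y : ℕ → ℝ)
    (hsum : (∑ i ∈ Icc 1 (N + 1), y i) = T)
    (hy1 : 0 ≤ y 1)
    (hfeas : ∀ i ∈ Icc 2 (N + 1), α * y (i - 1) ≤ y i)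
    (hopt : ∀ z : ℕ → ℝ, (∑ i ∈ Icc 1 (N + 1), z i) = T → 0 ≤ z 1 →
      (∀ i ∈ Icc 2 (N + 1), α * z (i - 1) ≤ z i) →
      (1 / 2 + α) * (∑ i ∈ Icc 1 N, (y i) ^ 2) + (1 / 2) * (y (N + 1)) ^ 2 ≤
      (1 / 2 + α) * (∑ i ∈ Icc 1 N, (z i) ^ 2) + (1 / 2) * (z (N + 1)) ^ 2) :
    ∀ i ∈ Icc 2 N, y i = α * y (i - 1) := by
  intro k hk
  rw [mem_Icc] at hk
  obtain ⟨hk2, hkN⟩ := hk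
  by_contra hne
  have hkmem : k ∈ Icc 2 (N + 1) := mem_Icc.mpr ⟨hk2, by omega⟩
  have hslack : α * y (k - 1) < y k :=
    lt_of_le_of_ne (hfeas k hkmem) (fun h => hne h.symm)
  -- nonnegativity of y on [1, N+1]
  have hnn : ∀ i, 1 ≤ i → i ≤ N + 1 → 0 ≤ y i := by
    intro i
    induction i with
    | zero => omega
    | succ n ih =>
      intro h1 h2
      by_cases hn0 : n = 0
      · subst hn0; exact hy1
      · have hn1 : 1 ≤ n := by omega
        have hf := hfeas (n + 1) (mem_Icc.mpr ⟨by omega, h2⟩)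
        simp only [Nat.add_sub_cancel] at hf
        have h0 : 0 ≤ y n := ih hn1 (by omega)
        nlinarith
  have hnnk1 : 0 ≤ y (k - 1) := hnn (k - 1) (by omega) (by omega)
  set s : ℝ := y k - α * y (k - 1) with hs
  have hspos : 0 < s := by simp only [hs]; linarith
  have h1α : (0:ℝ) < 1 + α := by linarith
  set ε : ℝ := s / (2 * (1 + α)) with hε
  have hεpos : 0 < ε := by
    apply div_pos hspos; linarith
  have hεα : (1 + α) * ε = s / 2 := by
    rw [hε]; field_simp
  have hεs : ε < s := by nlinarith
  set z : ℕ → ℝ :=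
    Function.update (Function.update y (k - 1) (y (k - 1) + ε)) k (y k - ε) with hz
  have hk1k : k - 1 ≠ k := by omega
  have hz_k : z k = y k - ε := by simp [hz]
  have hz_k1 : z (k - 1) = y (k - 1) + ε := by
    simp [hz, Function.update_of_ne hk1k]
  have hz_other : ∀ i, i ≠ k → i ≠ k - 1 → z i = y i := by
    intro i hi hi'
    simp [hz, Function.update_of_ne hi, Function.update_of_ne hi']
  -- key sum identity
  have key : ∀ (S : Finset ℕ) (g : ℝ → ℝ), k ∈ S → k - 1 ∈ S →
      ∑ i ∈ S, g (z i) =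
        g (y k - ε) + g (y (k - 1) + ε) - g (y k) - g (y (k - 1)) +
          ∑ i ∈ S, g (y i) := by
    intro S g hkS hk1S
    have hk1S' : k - 1 ∈ S.erase k := mem_erase.mpr ⟨hk1k, hk1S⟩
    have ez : ∑ i ∈ (S.erase k).erase (k - 1), g (z i) =
        ∑ i ∈ (S.erase k).erase (k - 1), g (y i) := by
      apply Finset.sum_congr rfl
      intro i hi
      rw [mem_erase] at hi
      obtain ⟨hi1, hi2⟩ := hi
      rw [mem_erase] at hi2
      rw [hz_other i hi2.1 hi1]
    have h1 := Finset.sum_erase_add (S.erase k) (fun i => g (z i)) hk1S'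
    have h2 := Finset.sum_erase_add S (fun i => g (z i)) hkS
    have h3 := Finset.sum_erase_add (S.erase k) (fun i => g (y i)) hk1S'
    have h4 := Finset.sum_erase_add S (fun i => g (y i)) hkS
    simp only [hz_k, hz_k1] at h1 h2
    linarith [ez]
  have hkS1 : k ∈ Icc 1 (N + 1) := mem_Icc.mpr ⟨by omega, by omega⟩
  have hk1S1 : k - 1 ∈ Icc 1 (N + 1) := mem_Icc.mpr ⟨by omega, by omega⟩
  have hkS2 : k ∈ Icc 1 N := mem_Icc.mpr ⟨by omega, hkN⟩
  have hk1S2 : k - 1 ∈ Icc 1 N := mem_Icc.mpr ⟨by omega, by omega⟩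
  -- z satisfies the sum constraint
  have hzsum : (∑ i ∈ Icc 1 (N + 1), z i) = T := by
    have := key (Icc 1 (N + 1)) (fun x => x) hkS1 hk1S1
    rw [this, hsum]; ring
  -- z 1 ≥ 0
  have hz1 : 0 ≤ z 1 := by
    by_cases h : k - 1 = 1
    · rw [← h, hz_k1]
      have : y (k - 1) = y 1 := by rw [h]
      linarith
    · rw [hz_other 1 (by omega) (fun hh => h hh.symm)]
      exact hy1
  -- z satisfies the feasibility constraints
  have hzfeas : ∀ i ∈ Icc 2 (N + 1), α * z (i - 1) ≤ z i := by
    intro i hi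
    rw [mem_Icc] at hi
    obtain ⟨hi2, hiN⟩ := hi
    by_cases h1 : i = k
    · subst h1
      rw [hz_k, hz_k1]
      have : α * (y (i - 1) + ε) = α * y (i - 1) + α * ε := by ring
      nlinarith
    · by_cases h2 : i = k - 1
      · have hik : i - 1 ≠ k := by omega
        have hik1 : i - 1 ≠ k - 1 := by omega
        rw [hz_other (i - 1) hik hik1]
        have hzi : z i = y i + ε := by rw [h2, hz_k1, ← h2]
        rw [hzi]
        have := hfeas i (mem_Icc.mpr ⟨hi2, by omega⟩)
        linarith
      · by_cases h3 : i = k + 1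
        · have hik : i ≠ k := by omega
          have hik1 : i ≠ k - 1 := by omega
          rw [hz_other i hik hik1]
          have hi1k : i - 1 = k := by omega
          rw [hi1k, hz_k]
          have := hfeas i (mem_Icc.mpr ⟨hi2, hiN⟩)
          rw [hi1k] at this
          nlinarith
        · have hik : i ≠ k := h1
          have hik1 : i ≠ k - 1 := h2
          have hi1k : i - 1 ≠ k := by omega
          have hi1k1 : i - 1 ≠ k - 1 := by omega
          rw [hz_other i hik hik1, hz_other (i - 1) hi1k hi1k1]
          exact hfeas i (mem_Icc.mpr ⟨hi2, hiN⟩)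
  -- apply optimality
  have hle := hopt z hzsum hz1 hzfeas
  -- compute objective difference
  have hsq : ∑ i ∈ Icc 1 N, (z i) ^ 2 =
      (y k - ε) ^ 2 + (y (k - 1) + ε) ^ 2 - (y k) ^ 2 - (y (k - 1)) ^ 2 +
        ∑ i ∈ Icc 1 N, (y i) ^ 2 := by
    have := key (Icc 1 N) (fun x => x ^ 2) hkS2 hk1S2
    simpa using this
  have hzN1 : z (N + 1) = y (N + 1) := hz_other (N + 1) (by omega) (by omega)
  rw [hsq, hzN1] at hle
  -- derive contradiction
  have hd : (y k - ε) ^ 2 + (y (k - 1) + ε) ^ 2 - (y k) ^ 2 - (y (k - 1)) ^ 2 =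
      2 * ε * (ε + y (k - 1) - y k) := by ring
  have hyk : y (k - 1) + s ≤ y k := by nlinarith
  have hneg : ε + y (k - 1) - y k < 0 := by linarith
  nlinarith [hle, mul_pos hεpos (by linarith : (0:ℝ) < y k - y (k - 1) - ε)]
end

section
/- Let c > 0, 0 < α < 1/2. Suppose (y, c') ∈ ℝ^{N+1} × ℝ^N minimizes (1/2)∑_{i=1}^{N+1} y_i² + ∑_{i=1}^{N} c'_i y_i subject to ∑_{i=1}^{N+1} y_i = T, y_1 ≥ 0, y_i ≥ c'_{i-1} for i = 2,...,N+1, c'_i ≥ 0, and c'_i ≥ c − α y_i for i = 1,...,N, with y_i > 0 for all i. Then c'_i = max(c − α y_i, 0) for all i = 1,...,N. -/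
open Finset

/-- Lemma 3: if (y, c') minimizes (1/2)∑ y_i² + ∑ c'_i y_i subject to
∑ y_i = T, y_1 ≥ 0, y_i ≥ c'_{i-1}, c'_i ≥ 0, c'_i ≥ c − α y_i, with y_i > 0 for all i,
then c'_i = max(c − α y_i, 0) for all i = 1,...,N. -/
theorem stmt_9 (N : ℕ) (hN : 1 ≤ N) (α c T : ℝ) (hc : 0 < c)
    (hα0 : 0 < α) (hα1 : α < 1 / 2)
    (y : ℕ → ℝ) (c' : ℕ → ℝ)
    (hsum : (∑ i ∈ Icc 1 (N + 1), y i) = T)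
    (hy1 : 0 ≤ y 1)
    (hfeas : ∀ i ∈ Icc 2 (N + 1), c' (i - 1) ≤ y i)
    (hc0 : ∀ i ∈ Icc 1 N, 0 ≤ c' i)
    (hcα : ∀ i ∈ Icc 1 N, c - α * y i ≤ c' i)
    (hypos : ∀ i ∈ Icc 1 (N + 1), 0 < y i)
    (hopt : ∀ z d : ℕ → ℝ, (∑ i ∈ Icc 1 (N + 1), z i) = T → 0 ≤ z 1 →
      (∀ i ∈ Icc 2 (N + 1), d (i - 1) ≤ z i) →
      (∀ i ∈ Icc 1 N, 0 ≤ d i) → (∀ i ∈ Icc 1 N, c - α * z i ≤ d i) →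
      (1 / 2) * (∑ i ∈ Icc 1 (N + 1), (y i) ^ 2) + (∑ i ∈ Icc 1 N, c' i * y i) ≤
      (1 / 2) * (∑ i ∈ Icc 1 (N + 1), (z i) ^ 2) + (∑ i ∈ Icc 1 N, d i * z i)) :
    ∀ i ∈ Icc 1 N, c' i = max (c - α * y i) 0 := by
  intro j hj
  set m := max (c - α * y j) 0 with hm
  have hm_le : m ≤ c' j := max_le (hcα j hj) (hc0 j hj)
  -- perturbed distortion vector
  set d : ℕ → ℝ := fun i => if i = j then m else c' i with hd
  have hdle : ∀ i, d i ≤ c' i := by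
    intro i
    by_cases h : i = j
    · simp [hd, h, hm_le]
    · simp [hd, h]
  have h1 : ∀ i ∈ Icc 2 (N + 1), d (i - 1) ≤ y i := fun i hi =>
    le_trans (hdle _) (hfeas i hi)
  have h2 : ∀ i ∈ Icc 1 N, 0 ≤ d i := by
    intro i hi
    by_cases h : i = j
    · simp [hd, h, hm, le_max_right]
    · simpa [hd, h] using hc0 i hi
  have h3 : ∀ i ∈ Icc 1 N, c - α * y i ≤ d i := by
    intro i hi
    by_cases h : i = j
    · subst h; simp [hd, hm, le_max_left]
    · simpa [hd, h] using hcα i hi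
  have key := hopt y d hsum hy1 h1 h2 h3
  have hsumle : (∑ i ∈ Icc 1 N, c' i * y i) ≤ (∑ i ∈ Icc 1 N, d i * y i) := by
    linarith
  have hdiff : (∑ i ∈ Icc 1 N, c' i * y i) - (∑ i ∈ Icc 1 N, d i * y i)
      = (c' j - m) * y j := by
    rw [← Finset.sum_sub_distrib]
    rw [Finset.sum_eq_single_of_mem j hj]
    · simp [hd]; ring
    · intro i _ hij
      simp [hd, hij]
  have hyj : 0 < y j := by
    apply hypos
    simp only [mem_Icc] at hj ⊢
    omega
  have : (c' j - m) * y j ≤ 0 := by linarith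
  have : c' j - m ≤ 0 := le_of_mul_le_mul_right (by linarith) hyj
  linarith [hm_le]
end

section
/- For 0 < α < 1/2, c > 0, and ((N+2−α)/(1+α))c < T < ((N+1−α)/α)c, the vector y with y_i = (T−c)/(N+1−2α) for i = 1,...,N and y_{N+1} = ((1−2α)T + Nc)/(N+1−2α) minimizes (1/2 − α)∑_{i=1}^{N} y_i² + c∑_{i=1}^{N} y_i + (1/2)y_{N+1}² over all y ∈ ℝ^{N+1} satisfying ∑_{i=1}^{N+1} y_i = T, y_1 ≥ 0, and y_i ≥ c − α y_{i-1} for i = 2,...,N+1. -/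
open Finset

/-- For 0 < α < 1/2, c > 0, ((N+2−α)/(1+α))c < T < ((N+1−α)/α)c,
the vector y with y_i = (T−c)/(N+1−2α) for i = 1,...,N and
y_{N+1} = ((1−2α)T + Nc)/(N+1−2α) minimizes
(1/2 − α)∑_{i=1}^N y_i² + c∑_{i=1}^N y_i + (1/2)y_{N+1}² over feasible y. -/
theorem stmt_10 (N : ℕ) (hN : 1 ≤ N) (α c T : ℝ) (hα0 : 0 < α) (hα1 : α < 1 / 2)
    (hc : 0 < c)
    (hT1 : (((N : ℝ) + 2 - α) / (1 + α)) * c < T)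
    (hT2 : T < (((N : ℝ) + 1 - α) / α) * c)
    (y : ℕ → ℝ)
    (hy : ∀ i ∈ Icc 1 N, y i = (T - c) / ((N : ℝ) + 1 - 2 * α))
    (hylast : y (N + 1) = ((1 - 2 * α) * T + (N : ℝ) * c) / ((N : ℝ) + 1 - 2 * α)) :
    ((∑ i ∈ Icc 1 (N + 1), y i) = T ∧ 0 ≤ y 1 ∧
      (∀ i ∈ Icc 2 (N + 1), c - α * y (i - 1) ≤ y i)) ∧
    (∀ z : ℕ → ℝ, (∑ i ∈ Icc 1 (N + 1), z i) = T → 0 ≤ z 1 →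
      (∀ i ∈ Icc 2 (N + 1), c - α * z (i - 1) ≤ z i) →
      (1 / 2 - α) * (∑ i ∈ Icc 1 N, (y i) ^ 2) + c * (∑ i ∈ Icc 1 N, y i) +
          (1 / 2) * (y (N + 1)) ^ 2 ≤
        (1 / 2 - α) * (∑ i ∈ Icc 1 N, (z i) ^ 2) + c * (∑ i ∈ Icc 1 N, z i) +
          (1 / 2) * (z (N + 1)) ^ 2) := by
  have hN1 : (1:ℝ) ≤ (N:ℝ) := by exact_mod_cast hN
  have hDpos : (0:ℝ) < (N:ℝ) + 1 - 2 * α := by nlinarith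
  have hTc : c < T := by
    have h1 : (1:ℝ) < ((N:ℝ) + 2 - α) / (1 + α) := by
      rw [lt_div_iff₀ (by linarith)]; nlinarith
    nlinarith
  -- sum of y over 1..N
  have hysumN : ∑ i ∈ Icc 1 N, y i = (N:ℝ) * ((T - c) / ((N:ℝ) + 1 - 2 * α)) := by
    rw [Finset.sum_congr rfl hy, Finset.sum_const, Nat.card_Icc]
    simp [nsmul_eq_mul]
  have hysum : ∑ i ∈ Icc 1 (N + 1), y i = T := by
    rw [Finset.sum_Icc_succ_top (by omega : 1 ≤ N + 1), hysumN, hylast]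
    field_simp
    ring
  -- first-order condition
  have hlam : ∀ i ∈ Icc 1 N, (1 - 2 * α) * y i + c = y (N + 1) := by
    intro i hi
    rw [hy i hi, hylast]
    field_simp
    ring
  constructor
  · refine ⟨hysum, ?_, ?_⟩
    · rw [hy 1 (by simp [hN])]
      exact div_nonneg (by linarith) (by linarith)
    · intro i hi
      simp only [mem_Icc] at hi
      have hprev : y (i - 1) = (T - c) / ((N:ℝ) + 1 - 2 * α) := by
        apply hy
        simp only [mem_Icc]
        omega
      have ha : y (i - 1) * ((N:ℝ) + 1 - 2 * α) = T - c := by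
        rw [hprev]; field_simp
      by_cases h : i = N + 1
      · subst h
        have hb : y (N + 1) * ((N:ℝ) + 1 - 2 * α) = (1 - 2 * α) * T + (N:ℝ) * c := by
          rw [hylast]; field_simp
        nlinarith
      · have hyi : y i * ((N:ℝ) + 1 - 2 * α) = T - c := by
          rw [hy i (by simp only [mem_Icc]; omega)]; field_simp
        -- need c - α * y(i-1) ≤ y i, i.e. (1+α)(T-c) ≥ c * D, from hT1
        have hT1' : ((N:ℝ) + 2 - α) * c < (1 + α) * T := by
          rw [div_mul_eq_mul_div, div_lt_iff₀ (by linarith)] at hT1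
          linarith
        nlinarith
  · intro z hzsum _ _
    have h2 : ∀ i ∈ Icc 1 N,
        y (N + 1) * (z i - y i) ≤
          ((1/2 - α) * ((z i)^2 - (y i)^2) + c * (z i - y i)) := by
      intro i hi
      rw [← hlam i hi]
      nlinarith [sq_nonneg (z i - y i)]
    have h3 : y (N + 1) * (z (N + 1) - y (N + 1)) ≤
        (1/2) * ((z (N + 1))^2 - (y (N + 1))^2) := by
      nlinarith [sq_nonneg (z (N + 1) - y (N + 1))]
    have h1 : ∑ i ∈ Icc 1 (N + 1), y (N + 1) * (z i - y i) = 0 := by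
      rw [← Finset.mul_sum, Finset.sum_sub_distrib, hzsum, hysum, sub_self, mul_zero]
    have h4 : (0:ℝ) ≤
        (∑ i ∈ Icc 1 N, ((1/2 - α) * ((z i)^2 - (y i)^2) + c * (z i - y i))) +
          (1/2) * ((z (N + 1))^2 - (y (N + 1))^2) := by
      calc (0:ℝ) = ∑ i ∈ Icc 1 (N + 1), y (N + 1) * (z i - y i) := h1.symm
        _ = (∑ i ∈ Icc 1 N, y (N + 1) * (z i - y i)) +
              y (N + 1) * (z (N + 1) - y (N + 1)) := by
            rw [Finset.sum_Icc_succ_top (by omega : 1 ≤ N + 1)]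
        _ ≤ _ := add_le_add (Finset.sum_le_sum h2) h3
    have hexp : (∑ i ∈ Icc 1 N, ((1/2 - α) * ((z i)^2 - (y i)^2) + c * (z i - y i)))
        = ((1/2 - α) * (∑ i ∈ Icc 1 N, (z i)^2) + c * (∑ i ∈ Icc 1 N, z i))
          - ((1/2 - α) * (∑ i ∈ Icc 1 N, (y i)^2) + c * (∑ i ∈ Icc 1 N, y i)) := by
      rw [Finset.sum_add_distrib, ← Finset.mul_sum, ← Finset.mul_sum,
        Finset.sum_sub_distrib, Finset.sum_sub_distrib]
      ring
    rw [hexp] at h4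
    linarith
end

section
/- For α = 1 and T > 0, the vector y with y_i = T/(N+3) for i = 1,...,N and y_{N+1} = 3T/(N+3) minimizes (3/2)∑_{i=1}^{N} y_i² + (1/2)y_{N+1}² over all y ∈ ℝ^{N+1} satisfying ∑_{i=1}^{N+1} y_i = T, y_1 ≥ 0, and y_i ≥ y_{i-1} for i = 2,...,N+1, and it satisfies y_i = y_{i-1} for i = 2,...,N with equality. -/
open Finset

/-- For α = 1 and T > 0, the vector y with y_i = T/(N+3) for i = 1,...,N
and y_{N+1} = 3T/(N+3) minimizes (3/2)∑_{i=1}^N y_i² + (1/2)y_{N+1}² over all y with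
∑ y_i = T, y_1 ≥ 0, y_i ≥ y_{i-1} for i = 2,...,N+1; moreover y_i = y_{i-1}
for i = 2,...,N. -/
theorem stmt_18 (N : ℕ) (hN : 1 ≤ N) (T : ℝ) (hT : 0 < T)
    (y : ℕ → ℝ)
    (hy : ∀ i ∈ Icc 1 N, y i = T / ((N : ℝ) + 3))
    (hylast : y (N + 1) = 3 * T / ((N : ℝ) + 3)) :
    ((∑ i ∈ Icc 1 (N + 1), y i) = T ∧ 0 ≤ y 1 ∧
      (∀ i ∈ Icc 2 (N + 1), y (i - 1) ≤ y i)) ∧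
    (∀ z : ℕ → ℝ, (∑ i ∈ Icc 1 (N + 1), z i) = T → 0 ≤ z 1 →
      (∀ i ∈ Icc 2 (N + 1), z (i - 1) ≤ z i) →
      (3 / 2) * (∑ i ∈ Icc 1 N, (y i) ^ 2) + (1 / 2) * (y (N + 1)) ^ 2 ≤
      (3 / 2) * (∑ i ∈ Icc 1 N, (z i) ^ 2) + (1 / 2) * (z (N + 1)) ^ 2) ∧
    (∀ i ∈ Icc 2 N, y i = y (i - 1)) := by
  have hden : (N : ℝ) + 3 ≠ 0 := by positivity
  set a : ℝ := T / ((N : ℝ) + 3) with ha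
  have ha0 : 0 ≤ a := by positivity
  have hsplit : ∀ f : ℕ → ℝ, ∑ i ∈ Icc 1 (N + 1), f i
      = (∑ i ∈ Icc 1 N, f i) + f (N + 1) := by
    intro f
    exact Finset.sum_Icc_succ_top (Nat.le_add_left 1 N) f
  have hycard : (∑ i ∈ Icc 1 N, y i) = (N : ℝ) * a := by
    rw [Finset.sum_congr rfl hy, Finset.sum_const, Nat.card_Icc]
    simp [nsmul_eq_mul]
  have hysq : (∑ i ∈ Icc 1 N, (y i) ^ 2) = (N : ℝ) * a ^ 2 := by
    rw [Finset.sum_congr rfl (fun i hi => by rw [hy i hi]), Finset.sum_const,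
      Nat.card_Icc]
    simp [nsmul_eq_mul]
  have hysum : (∑ i ∈ Icc 1 (N + 1), y i) = T := by
    rw [hsplit, hycard, hylast]
    rw [ha]; field_simp
  refine ⟨⟨hysum, ?_, ?_⟩, ?_, ?_⟩
  · rw [hy 1 (by simp [hN])]; exact ha0
  · intro i hi
    simp only [Finset.mem_Icc] at hi
    have h1 : y (i - 1) = a := by
      apply hy
      simp only [Finset.mem_Icc]
      omega
    rw [h1]
    rcases eq_or_lt_of_le hi.2 with h | h
    · rw [h, hylast]
      rw [ha]
      rw [div_le_div_iff₀ (by positivity) (by positivity)]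
      nlinarith
    · rw [hy i (by simp only [Finset.mem_Icc]; omega)]
  · intro z hzsum hz1 hzmono
    have hzsplit := hsplit z
    rw [hzsum] at hzsplit
    have hkey : (∑ i ∈ Icc 1 N, (2 * a * z i - a ^ 2))
        ≤ (∑ i ∈ Icc 1 N, (z i) ^ 2) := by
      apply Finset.sum_le_sum
      intro i _
      nlinarith [sq_nonneg (z i - a)]
    have hlin : (∑ i ∈ Icc 1 N, (2 * a * z i - a ^ 2))
        = 2 * a * (∑ i ∈ Icc 1 N, z i) - (N : ℝ) * a ^ 2 := by
      rw [Finset.sum_sub_distrib, ← Finset.mul_sum, Finset.sum_const, Nat.card_Icc]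
      simp [nsmul_eq_mul]
    rw [hlin] at hkey
    have hT' : (∑ i ∈ Icc 1 N, z i) + z (N + 1) = ((N : ℝ) + 3) * a := by
      rw [← hzsplit]
      rw [ha]; field_simp
    rw [hysq, hylast]
    have hlast : 3 * T / ((N : ℝ) + 3) = 3 * a := by rw [ha]; ring
    rw [hlast]
    nlinarith [sq_nonneg (z (N + 1) - 3 * a)]
  · intro i hi
    simp only [Finset.mem_Icc] at hi
    rw [hy i (by simp only [Finset.mem_Icc]; omega),
      hy (i - 1) (by simp only [Finset.mem_Icc]; omega)]
end
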